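/- (Type S₂) For α, β ∈ ℂ with αβ ≠ 0, let A(α,β) = ℂ⟨x,y,z⟩/(zx − αyz, xz − βzy, x² + αβy²). For α', β' ∈ ℂ with α'β' ≠ 0, the algebras A(α,β) and A(α',β') are isomorphic as graded algebras if and only if (α':β') = (α:β) as points of ℙ¹, i.e. there exists a nonzero scalar λ ∈ ℂ with (α',β') = (λα, λβ). -/

import Mathlib

noncomputable section

/-- The free algebra `ℂ⟨x,y,z⟩`. -/
abbrev F3 : Type := FreeAlgebra ℂ (Fin 3)

def X : F3 := FreeAlgebra.ι ℂ 0
def Y : F3 := FreeAlgebra.ι ℂ 1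
def Z : F3 := FreeAlgebra.ι ℂ 2

/-- The relation identifying the three relators with `0`. -/
def rel3 (f₁ f₂ f₃ : F3) : F3 → F3 → Prop :=
  fun a b => (a = f₁ ∨ a = f₂ ∨ a = f₃) ∧ b = 0

/-- `ℂ⟨x,y,z⟩/(f₁,f₂,f₃)`, the quotient by the two-sided ideal generated by `f₁,f₂,f₃`. -/
abbrev QuadAlg (f₁ f₂ f₃ : F3) : Type := RingQuot (rel3 f₁ f₂ f₃)

/-- The linear span of the images of `x, y, z` in the quotient. -/
def genSpan (f₁ f₂ f₃ : F3) : Submodule ℂ (QuadAlg f₁ f₂ f₃) :=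
  Submodule.span ℂ {RingQuot.mkAlgHom ℂ (rel3 f₁ f₂ f₃) X,
                    RingQuot.mkAlgHom ℂ (rel3 f₁ f₂ f₃) Y,
                    RingQuot.mkAlgHom ℂ (rel3 f₁ f₂ f₃) Z}

/-- Isomorphism of graded algebras: a `ℂ`-algebra isomorphism carrying the span of
the images of `x,y,z` onto the span of the images of `x,y,z`. -/
def GrIso (f₁ f₂ f₃ g₁ g₂ g₃ : F3) : Prop :=
  ∃ e : QuadAlg f₁ f₂ f₃ ≃ₐ[ℂ] QuadAlg g₁ g₂ g₃,
    Submodule.map e.toLinearMap (genSpan f₁ f₂ f₃) = genSpan g₁ g₂ g₃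

namespace S2aux

/-! ### A truncated tensor algebra -/

variable (W : Type) [AddCommGroup W] [Module ℂ W]
  (b : (Fin 3 → ℂ) →ₗ[ℂ] (Fin 3 → ℂ) →ₗ[ℂ] W)

/-- Truncated tensor algebra `ℂ ⊕ V ⊕ W` with product in degree 2 given by `b`. -/
@[nolint unusedArguments, reducible]
def Tr (_b : (Fin 3 → ℂ) →ₗ[ℂ] (Fin 3 → ℂ) →ₗ[ℂ] W) : Type :=
  ℂ × (Fin 3 → ℂ) × W

instance : AddCommGroup (Tr W b) := inferInstanceAs (AddCommGroup (ℂ × (Fin 3 → ℂ) × W))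
instance : Module ℂ (Tr W b) := inferInstanceAs (Module ℂ (ℂ × (Fin 3 → ℂ) × W))

instance : Mul (Tr W b) :=
  ⟨fun x y => (x.1 * y.1, x.1 • y.2.1 + y.1 • x.2.1, x.1 • y.2.2 + y.1 • x.2.2 + b x.2.1 y.2.1)⟩

instance : One (Tr W b) := ⟨((1 : ℂ), 0, 0)⟩

lemma mul_def (x y : Tr W b) :
    x * y = (x.1 * y.1, x.1 • y.2.1 + y.1 • x.2.1, x.1 • y.2.2 + y.1 • x.2.2 + b x.2.1 y.2.1) :=
  rfl

lemma add_def (x y : Tr W b) : x + y = (x.1 + y.1, x.2.1 + y.2.1, x.2.2 + y.2.2) := rfl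
lemma smul_def (r : ℂ) (x : Tr W b) : r • x = (r * x.1, r • x.2.1, r • x.2.2) := rfl
lemma zero_def : (0 : Tr W b) = ((0 : ℂ), 0, 0) := rfl
lemma one_def : (1 : Tr W b) = ((1 : ℂ), 0, 0) := rfl

instance : Ring (Tr W b) :=
  { (inferInstance : AddCommGroup (Tr W b)), (inferInstance : Mul (Tr W b)),
    (inferInstance : One (Tr W b)) with
    left_distrib := by
      rintro ⟨a, v, m⟩ ⟨a', v', m'⟩ ⟨a'', v'', m''⟩
      refine Prod.ext ?_ (Prod.ext ?_ ?_) <;>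
        simp only [mul_def, add_def, map_add, smul_add, add_smul, LinearMap.add_apply] <;>
        first | module | ring
    right_distrib := by
      rintro ⟨a, v, m⟩ ⟨a', v', m'⟩ ⟨a'', v'', m''⟩
      refine Prod.ext ?_ (Prod.ext ?_ ?_) <;>
        simp only [mul_def, add_def, map_add, smul_add, add_smul, LinearMap.add_apply] <;>
        first | module | ring
    zero_mul := by
      rintro ⟨a, v, m⟩
      refine Prod.ext ?_ (Prod.ext ?_ ?_) <;>
        simp [mul_def, zero_def]
    mul_zero := by
      rintro ⟨a, v, m⟩
      refine Prod.ext ?_ (Prod.ext ?_ ?_) <;>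
        simp [mul_def, zero_def]
    mul_assoc := by
      rintro ⟨a, v, m⟩ ⟨a', v', m'⟩ ⟨a'', v'', m''⟩
      refine Prod.ext ?_ (Prod.ext ?_ ?_) <;>
        simp only [mul_def, map_add, map_smul, smul_add, LinearMap.add_apply,
          LinearMap.smul_apply] <;>
        first | module | ring
    one_mul := by
      rintro ⟨a, v, m⟩
      refine Prod.ext ?_ (Prod.ext ?_ ?_) <;>
        simp [mul_def, one_def]
    mul_one := by
      rintro ⟨a, v, m⟩
      refine Prod.ext ?_ (Prod.ext ?_ ?_) <;>
        simp [mul_def, one_def] }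

instance : Algebra ℂ (Tr W b) :=
  Algebra.ofModule
    (fun r x y => by
      refine Prod.ext ?_ (Prod.ext ?_ ?_) <;>
        simp only [mul_def, smul_def, map_smul, LinearMap.smul_apply, smul_smul] <;>
        first | module | ring)
    (fun r x y => by
      refine Prod.ext ?_ (Prod.ext ?_ ?_) <;>
        simp only [mul_def, smul_def, map_smul, LinearMap.smul_apply, smul_smul] <;>
        first | module | ring)

/-- degree-1 element -/
def deg1 (p : Fin 3 → ℂ) : Tr W b := (0, p, 0)

/-- degree-2 element -/
def deg2 (m : W) : Tr W b := (0, 0, m)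

lemma deg1_mul (p q : Fin 3 → ℂ) : deg1 W b p * deg1 W b q = deg2 W b (b p q) := by
  refine Prod.ext ?_ (Prod.ext ?_ ?_) <;> simp [deg1, deg2, mul_def]

lemma deg1_add (p q : Fin 3 → ℂ) : deg1 W b (p + q) = deg1 W b p + deg1 W b q := by
  refine Prod.ext ?_ (Prod.ext ?_ ?_) <;> simp [deg1, add_def]

lemma deg1_smul (r : ℂ) (p : Fin 3 → ℂ) : deg1 W b (r • p) = r • deg1 W b p := by
  refine Prod.ext ?_ (Prod.ext ?_ ?_) <;> simp [deg1, smul_def]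

lemma deg2_add (m m' : W) : deg2 W b (m + m') = deg2 W b m + deg2 W b m' := by
  refine Prod.ext ?_ (Prod.ext ?_ ?_) <;> simp [deg2, add_def]

lemma sub_def (x y : Tr W b) : x - y = (x.1 - y.1, x.2.1 - y.2.1, x.2.2 - y.2.2) := rfl

lemma deg2_sub (m m' : W) : deg2 W b (m - m') = deg2 W b m - deg2 W b m' := by
  refine Prod.ext ?_ (Prod.ext ?_ ?_) <;> simp [deg2, sub_def]

lemma deg2_smul (r : ℂ) (m : W) : deg2 W b (r • m) = r • deg2 W b m := by
  refine Prod.ext ?_ (Prod.ext ?_ ?_) <;> simp [deg2, smul_def]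

lemma deg2_eq_zero {m : W} : deg2 W b m = 0 ↔ m = 0 := by
  constructor
  · intro hm
    have := congrArg (fun x : Tr W b => x.2.2) hm
    simpa [deg2, zero_def] using this
  · rintro rfl; rfl

lemma deg1_eq_zero {p : Fin 3 → ℂ} : deg1 W b p = 0 ↔ p = 0 := by
  constructor
  · intro hm
    have := congrArg (fun x : Tr W b => x.2.1) hm
    simpa [deg1, zero_def] using this
  · rintro rfl; rfl

/-- The canonical algebra map from the free algebra to the truncated algebra. -/
def phi : F3 →ₐ[ℂ] Tr W b := FreeAlgebra.lift ℂ (fun i => deg1 W b (Pi.single i 1))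

lemma phi_ι (i : Fin 3) : phi W b (FreeAlgebra.ι ℂ i) = deg1 W b (Pi.single i 1) :=
  FreeAlgebra.lift_ι_apply _ _

/-! ### The relator matrices -/

/-- standard basis vectors -/
def ev (i : Fin 3) : Fin 3 → ℂ := Pi.single i 1

def G1 (s : ℂ) : Matrix (Fin 3) (Fin 3) ℂ :=
  Matrix.vecMulVec (ev 2) (ev 0) - s • Matrix.vecMulVec (ev 1) (ev 2)

def G2 (t : ℂ) : Matrix (Fin 3) (Fin 3) ℂ :=
  Matrix.vecMulVec (ev 0) (ev 2) - t • Matrix.vecMulVec (ev 2) (ev 1)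

def G3 (s t : ℂ) : Matrix (Fin 3) (Fin 3) ℂ :=
  Matrix.vecMulVec (ev 0) (ev 0) + (s * t) • Matrix.vecMulVec (ev 1) (ev 1)

/-- The span of the three relator matrices. -/
def Sp (s t : ℂ) : Submodule ℂ (Matrix (Fin 3) (Fin 3) ℂ) :=
  Submodule.span ℂ {G1 s, G2 t, G3 s t}

abbrev Wq (s t : ℂ) : Type := Matrix (Fin 3) (Fin 3) ℂ ⧸ Sp s t

/-- `vecMulVec` as a bilinear map. -/
def bMat : (Fin 3 → ℂ) →ₗ[ℂ] (Fin 3 → ℂ) →ₗ[ℂ] Matrix (Fin 3) (Fin 3) ℂ :=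
  LinearMap.mk₂ ℂ Matrix.vecMulVec
    (fun v v' w => by ext i j; simp [Matrix.vecMulVec_apply, add_mul])
    (fun c v w => by ext i j; simp [Matrix.vecMulVec_apply, mul_assoc])
    (fun v w w' => by ext i j; simp [Matrix.vecMulVec_apply, mul_add])
    (fun c v w => by ext i j; simp [Matrix.vecMulVec_apply]; ring)

def bQ (s t : ℂ) : (Fin 3 → ℂ) →ₗ[ℂ] (Fin 3 → ℂ) →ₗ[ℂ] Wq s t :=
  bMat.compr₂ (Sp s t).mkQ

/-! ### The relators -/

@[reducible]
def fR1 (s : ℂ) : F3 := Z*X - s • (Y*Z)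
@[reducible]
def fR2 (t : ℂ) : F3 := X*Z - t • (Z*Y)
@[reducible]
def fR3 (s t : ℂ) : F3 := X*X + (s*t) • (Y*Y)

lemma phi_fR1 (s : ℂ) : phi W b (fR1 s) = deg2 W b (b (ev 2) (ev 0) - s • b (ev 1) (ev 2)) := by
  rw [fR1, map_sub, map_smul, map_mul, map_mul, X, Y, Z, phi_ι, phi_ι, phi_ι,
    deg1_mul, deg1_mul, deg2_sub, deg2_smul, ev, ev, ev]

lemma phi_fR2 (t : ℂ) : phi W b (fR2 t) = deg2 W b (b (ev 0) (ev 2) - t • b (ev 2) (ev 1)) := by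
  rw [fR2, map_sub, map_smul, map_mul, map_mul, X, Y, Z, phi_ι, phi_ι, phi_ι,
    deg1_mul, deg1_mul, deg2_sub, deg2_smul, ev, ev, ev]

lemma phi_fR3 (s t : ℂ) :
    phi W b (fR3 s t) = deg2 W b (b (ev 0) (ev 0) + (s*t) • b (ev 1) (ev 1)) := by
  rw [fR3, map_add, map_smul, map_mul, map_mul, X, Y, phi_ι, phi_ι,
    deg1_mul, deg1_mul, deg2_add, deg2_smul, ev, ev]

/-! ### The algebra map out of the quadratic algebra -/

lemma bQ_apply (s t : ℂ) (p q : Fin 3 → ℂ) :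
    bQ s t p q = Submodule.Quotient.mk (Matrix.vecMulVec p q) := rfl

lemma phi_rel (s t : ℂ) :
    ∀ ⦃x y : F3⦄, rel3 (fR1 s) (fR2 t) (fR3 s t) x y → phi (Wq s t) (bQ s t) x = phi _ _ y := by
  rintro x y ⟨(rfl | rfl | rfl), rfl⟩ <;>
    [rw [phi_fR1]; rw [phi_fR2]; rw [phi_fR3]] <;>
    rw [map_zero, deg2_eq_zero] <;>
    simp only [bQ_apply, ← Submodule.Quotient.mk_smul, ← Submodule.Quotient.mk_sub,
      ← Submodule.Quotient.mk_add, Submodule.Quotient.mk_eq_zero]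
  · exact Submodule.subset_span (Set.mem_insert_iff.2 (Or.inl rfl))
  · exact Submodule.subset_span (Set.mem_insert_iff.2 (Or.inr (Set.mem_insert_iff.2 (Or.inl rfl))))
  · exact Submodule.subset_span (Set.mem_insert_iff.2 (Or.inr (Set.mem_insert_iff.2
      (Or.inr rfl))))

/-- The map from the quadratic algebra to the truncated algebra. -/
def Psi (s t : ℂ) : QuadAlg (fR1 s) (fR2 t) (fR3 s t) →ₐ[ℂ] Tr (Wq s t) (bQ s t) :=
  RingQuot.liftAlgHom ℂ ⟨phi (Wq s t) (bQ s t), phi_rel s t⟩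

lemma Psi_mk (s t : ℂ) (x : F3) :
    Psi s t (RingQuot.mkAlgHom ℂ (rel3 (fR1 s) (fR2 t) (fR3 s t)) x)
      = phi (Wq s t) (bQ s t) x := by
  simp [Psi, RingQuot.liftAlgHom_mkAlgHom_apply]

/-! ### Generators of the quadratic algebra -/

def xQ (s t : ℂ) : QuadAlg (fR1 s) (fR2 t) (fR3 s t) :=
  RingQuot.mkAlgHom ℂ (rel3 (fR1 s) (fR2 t) (fR3 s t)) X
def yQ (s t : ℂ) : QuadAlg (fR1 s) (fR2 t) (fR3 s t) :=
  RingQuot.mkAlgHom ℂ (rel3 (fR1 s) (fR2 t) (fR3 s t)) Y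
def zQ (s t : ℂ) : QuadAlg (fR1 s) (fR2 t) (fR3 s t) :=
  RingQuot.mkAlgHom ℂ (rel3 (fR1 s) (fR2 t) (fR3 s t)) Z

lemma Psi_xQ (s t : ℂ) : Psi s t (xQ s t) = deg1 _ (bQ s t) (Pi.single 0 1) := by
  rw [xQ, Psi_mk, X, phi_ι]
lemma Psi_yQ (s t : ℂ) : Psi s t (yQ s t) = deg1 _ (bQ s t) (Pi.single 1 1) := by
  rw [yQ, Psi_mk, Y, phi_ι]
lemma Psi_zQ (s t : ℂ) : Psi s t (zQ s t) = deg1 _ (bQ s t) (Pi.single 2 1) := by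
  rw [zQ, Psi_mk, Z, phi_ι]

lemma mk_fR1 (s t : ℂ) : RingQuot.mkAlgHom ℂ (rel3 (fR1 s) (fR2 t) (fR3 s t)) (fR1 s) = 0 := by
  have := RingQuot.mkAlgHom_rel ℂ
    (show rel3 (fR1 s) (fR2 t) (fR3 s t) (fR1 s) 0 from ⟨Or.inl rfl, rfl⟩)
  simpa using this

lemma mk_fR2 (s t : ℂ) : RingQuot.mkAlgHom ℂ (rel3 (fR1 s) (fR2 t) (fR3 s t)) (fR2 t) = 0 := by
  have := RingQuot.mkAlgHom_rel ℂ
    (show rel3 (fR1 s) (fR2 t) (fR3 s t) (fR2 t) 0 from ⟨Or.inr (Or.inl rfl), rfl⟩)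
  simpa using this

lemma mk_fR3 (s t : ℂ) : RingQuot.mkAlgHom ℂ (rel3 (fR1 s) (fR2 t) (fR3 s t)) (fR3 s t) = 0 := by
  have := RingQuot.mkAlgHom_rel ℂ
    (show rel3 (fR1 s) (fR2 t) (fR3 s t) (fR3 s t) 0 from ⟨Or.inr (Or.inr rfl), rfl⟩)
  simpa using this

lemma rel1 (s t : ℂ) : zQ s t * xQ s t = s • (yQ s t * zQ s t) := by
  have := mk_fR1 s t
  rw [fR1, map_sub, map_smul, map_mul, map_mul, sub_eq_zero] at this
  exact this

lemma rel2 (s t : ℂ) : xQ s t * zQ s t = t • (zQ s t * yQ s t) := by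
  have := mk_fR2 s t
  rw [fR2, map_sub, map_smul, map_mul, map_mul, sub_eq_zero] at this
  exact this

lemma rel3' (s t : ℂ) : xQ s t * xQ s t = -((s*t) • (yQ s t * yQ s t)) := by
  have := mk_fR3 s t
  rw [fR3, map_add, map_smul, map_mul, map_mul, add_eq_zero_iff_eq_neg] at this
  exact this

/-! ### Span membership helpers -/

lemma mem_span_triple {M : Type*} [AddCommGroup M] [Module ℂ M] {a b c x : M}
    (h : x ∈ Submodule.span ℂ ({a, b, c} : Set M)) :
    ∃ p q r : ℂ, x = p • a + q • b + r • c := by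
  rw [Submodule.mem_span_insert] at h
  obtain ⟨p, z, hz, rfl⟩ := h
  rw [Submodule.mem_span_insert] at hz
  obtain ⟨q, z', hz', rfl⟩ := hz
  rw [Submodule.mem_span_singleton] at hz'
  obtain ⟨r, rfl⟩ := hz'
  exact ⟨p, q, r, by abel⟩

lemma Sp_entries {s t : ℂ} {N : Matrix (Fin 3) (Fin 3) ℂ} (hN : N ∈ Sp s t) :
    N 1 2 = -s * N 2 0 ∧ N 2 1 = -t * N 0 2 ∧ N 2 2 = 0 := by
  obtain ⟨c1, c2, c3, rfl⟩ := mem_span_triple hN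
  refine ⟨?_, ?_, ?_⟩ <;>
    simp [G1, G2, G3, ev, Matrix.vecMulVec_apply, Pi.single_apply, Matrix.smul_apply,
      Matrix.add_apply, Matrix.sub_apply] <;> ring

/-! ### The scalar endgame -/

lemma endgame {a b a' b' u0 u1 u2 v0 v1 v2 w0 w1 w2 : ℂ}
    (ha : a ≠ 0) (hb : b ≠ 0) (ha' : a' ≠ 0) (hb' : b' ≠ 0)
    (A1 : w2 * u2 - a * (v2 * w2) = 0)
    (A4 : w1 * u2 - a * (v1 * w2) = -a' * (w2 * u0 - a * (v2 * w0)))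
    (A5 : w2 * u1 - a * (v2 * w1) = -b' * (w0 * u2 - a * (v0 * w2)))
    (A2 : u2 * w2 - b * (w2 * v2) = 0)
    (A6 : u1 * w2 - b * (w1 * v2) = -a' * (u2 * w0 - b * (w2 * v0)))
    (A7 : u2 * w1 - b * (w2 * v1) = -b' * (u0 * w2 - b * (w0 * v2)))
    (A3 : u2 * u2 + a * b * (v2 * v2) = 0)
    (hv : ¬(v0 = 0 ∧ v1 = 0 ∧ v2 = 0))
    (hw : ¬(w0 = 0 ∧ w1 = 0 ∧ w2 = 0))
    (hcol : ¬(u2 = 0 ∧ v2 = 0 ∧ w2 = 0)) :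
    a' * b = a * b' := by
  by_cases hw2 : w2 = 0
  · -- degenerate case, leads to a contradiction
    subst hw2
    exfalso
    have hv2 : v2 ≠ 0 := by
      rintro rfl
      have hu2 : u2 = 0 := mul_self_eq_zero.1 (by linear_combination A3)
      exact hcol ⟨hu2, rfl, rfl⟩
    have hu2 : u2 ≠ 0 := by
      intro hu2
      have h1 : a * b * (v2 * v2) = 0 := by linear_combination A3 - u2 * hu2
      rcases mul_eq_zero.1 h1 with hh | hh
      · exact absurd hh (mul_ne_zero ha hb)
      · exact hv2 (mul_self_eq_zero.1 hh)
    have e4 : w1 * u2 = a' * a * (v2 * w0) := by linear_combination A4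
    have e6 : b * (w1 * v2) = a' * (u2 * w0) := by linear_combination -A6
    have key : 2 * (a' * (u2 * u2 * w0)) = 0 := by
      linear_combination (b * v2) * e4 - u2 * e6 + a' * w0 * A3
    have hw0 : w0 = 0 := by
      rcases mul_eq_zero.1 key with hh | hh
      · exact absurd hh two_ne_zero
      · rcases mul_eq_zero.1 hh with hh' | hh'
        · exact absurd hh' ha'
        · rcases mul_eq_zero.1 hh' with hh'' | hh''
          · exact absurd (mul_self_eq_zero.1 hh'') hu2
          · exact hh''
    have hw1 : w1 = 0 := by
      have h1 : w1 * u2 = 0 := by rw [hw0] at e4; linear_combination e4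
      exact (mul_eq_zero.1 h1).resolve_right hu2
    exact hw ⟨hw0, hw1, rfl⟩
  · -- main case : w2 ≠ 0
    have hu2a : u2 = a * v2 :=
      sub_eq_zero.1 (((mul_eq_zero.1 (show w2 * (u2 - a * v2) = 0 by
        linear_combination A1)).resolve_left hw2))
    have hu2b : u2 = b * v2 :=
      sub_eq_zero.1 (((mul_eq_zero.1 (show w2 * (u2 - b * v2) = 0 by
        linear_combination A2)).resolve_left hw2))
    have hv2 : v2 = 0 := by
      have h2 : 2 * (a * b * (v2 * v2)) = 0 := by
        linear_combination A3 - u2 * hu2a - a * v2 * hu2b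
      rcases mul_eq_zero.1 h2 with hh | hh
      · exact absurd hh two_ne_zero
      · rcases mul_eq_zero.1 hh with hh' | hh'
        · exact absurd hh' (mul_ne_zero ha hb)
        · exact mul_self_eq_zero.1 hh'
    have hu2z : u2 = 0 := by rw [hv2, mul_zero] at hu2a; exact hu2a
    have e1 : a * v1 = a' * u0 :=
      sub_eq_zero.1 ((mul_eq_zero.1 (show w2 * (a * v1 - a' * u0) = 0 by
        linear_combination -A4 + w1 * hu2z - a * a' * w0 * hv2)).resolve_left hw2)
    have e2 : b * v1 = b' * u0 :=
      sub_eq_zero.1 ((mul_eq_zero.1 (show w2 * (b * v1 - b' * u0) = 0 by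
        linear_combination -A7 + w1 * hu2z - b * b' * w0 * hv2)).resolve_left hw2)
    have e3 : u1 = a * b' * v0 :=
      sub_eq_zero.1 ((mul_eq_zero.1 (show w2 * (u1 - a * b' * v0) = 0 by
        linear_combination A5 + a * w1 * hv2 - b' * w0 * hu2z)).resolve_left hw2)
    have e4 : u1 = a' * b * v0 :=
      sub_eq_zero.1 ((mul_eq_zero.1 (show w2 * (u1 - a' * b * v0) = 0 by
        linear_combination A6 + b * w1 * hv2 - a' * w0 * hu2z)).resolve_left hw2)
    by_cases hu0 : u0 = 0
    · have hv1 : v1 = 0 := by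
        have : a * v1 = 0 := by rw [hu0, mul_zero] at e1; exact e1
        exact (mul_eq_zero.1 this).resolve_left ha
      have hv0 : v0 ≠ 0 := fun hv0 => hv ⟨hv0, hv1, hv2⟩
      have h5 : (a' * b - a * b') * v0 = 0 := by linear_combination e3 - e4
      exact sub_eq_zero.1 ((mul_eq_zero.1 h5).resolve_right hv0)
    · have h5 : (a' * b - a * b') * u0 = 0 := by linear_combination a * e2 - b * e1
      exact sub_eq_zero.1 ((mul_eq_zero.1 h5).resolve_right hu0)


/-! ### The isomorphism for proportional parameters -/

/-- The underlying map on the free algebra. -/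
def bwd (s' t' l : ℂ) : F3 →ₐ[ℂ] QuadAlg (fR1 s') (fR2 t') (fR3 s' t') :=
  FreeAlgebra.lift ℂ ![xQ s' t', l • yQ s' t', zQ s' t']

lemma bwd_X (s' t' l : ℂ) : bwd s' t' l X = xQ s' t' := by
  rw [X, bwd, FreeAlgebra.lift_ι_apply]; rfl

lemma bwd_Y (s' t' l : ℂ) : bwd s' t' l Y = l • yQ s' t' := by
  rw [Y, bwd, FreeAlgebra.lift_ι_apply]; rfl

lemma bwd_Z (s' t' l : ℂ) : bwd s' t' l Z = zQ s' t' := by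
  rw [Z, bwd, FreeAlgebra.lift_ι_apply]; rfl

lemma bwd_rel (s t s' t' l : ℂ) (hs : s' = l * s) (ht : t' = l * t) :
    ∀ ⦃x y : F3⦄, rel3 (fR1 s) (fR2 t) (fR3 s t) x y → bwd s' t' l x = bwd s' t' l y := by
  rintro x y ⟨(rfl | rfl | rfl), rfl⟩ <;> rw [map_zero] <;> [skip; skip; skip]
  · rw [show fR1 s = Z*X - s • (Y*Z) from rfl, map_sub, map_smul, map_mul, map_mul, bwd_X,
      bwd_Y, bwd_Z, smul_mul_assoc, smul_smul, rel1 s' t', hs, mul_comm s l, sub_self]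
  · rw [show fR2 t = X*Z - t • (Z*Y) from rfl, map_sub, map_smul, map_mul, map_mul, bwd_X,
      bwd_Y, bwd_Z, mul_smul_comm, smul_smul, rel2 s' t', ht, mul_comm t l, sub_self]
  · rw [show fR3 s t = X*X + (s*t) • (Y*Y) from rfl, map_add, map_smul, map_mul, map_mul, bwd_X,
      bwd_Y, smul_mul_assoc, mul_smul_comm, smul_smul, smul_smul, rel3' s' t', hs, ht]
    rw [show s * t * l * l = l * s * (l * t) by ring, neg_add_cancel]

/-- The algebra homomorphism between the quadratic algebras. -/
def bwdHom (s t s' t' l : ℂ) (hs : s' = l * s) (ht : t' = l * t) :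
    QuadAlg (fR1 s) (fR2 t) (fR3 s t) →ₐ[ℂ] QuadAlg (fR1 s') (fR2 t') (fR3 s' t') :=
  RingQuot.liftAlgHom ℂ ⟨bwd s' t' l, bwd_rel s t s' t' l hs ht⟩

lemma bwdHom_xQ (s t s' t' l : ℂ) (hs : s' = l * s) (ht : t' = l * t) :
    bwdHom s t s' t' l hs ht (xQ s t) = xQ s' t' := by
  rw [xQ, bwdHom, RingQuot.liftAlgHom_mkAlgHom_apply, bwd_X]

lemma bwdHom_yQ (s t s' t' l : ℂ) (hs : s' = l * s) (ht : t' = l * t) :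
    bwdHom s t s' t' l hs ht (yQ s t) = l • yQ s' t' := by
  rw [yQ, bwdHom, RingQuot.liftAlgHom_mkAlgHom_apply, bwd_Y]

lemma bwdHom_zQ (s t s' t' l : ℂ) (hs : s' = l * s) (ht : t' = l * t) :
    bwdHom s t s' t' l hs ht (zQ s t) = zQ s' t' := by
  rw [zQ, bwdHom, RingQuot.liftAlgHom_mkAlgHom_apply, bwd_Z]

/-- The algebra isomorphism between the quadratic algebras. -/
def bwdEquiv (s t s' t' l : ℂ) (hl : l ≠ 0) (hs : s' = l * s) (ht : t' = l * t) :
    QuadAlg (fR1 s) (fR2 t) (fR3 s t) ≃ₐ[ℂ] QuadAlg (fR1 s') (fR2 t') (fR3 s' t') := by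
  have hs' : s = l⁻¹ * s' := by rw [hs]; field_simp
  have ht' : t = l⁻¹ * t' := by rw [ht]; field_simp
  refine AlgEquiv.ofAlgHom (bwdHom s t s' t' l hs ht) (bwdHom s' t' s t l⁻¹ hs' ht') ?_ ?_
  · apply RingQuot.ringQuot_ext'
    apply FreeAlgebra.hom_ext
    funext i
    fin_cases i
    · show bwdHom s t s' t' l hs ht (bwdHom s' t' s t l⁻¹ hs' ht' (xQ s' t')) = xQ s' t'
      rw [bwdHom_xQ, bwdHom_xQ]
    · show bwdHom s t s' t' l hs ht (bwdHom s' t' s t l⁻¹ hs' ht' (yQ s' t')) = yQ s' t'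
      rw [bwdHom_yQ, map_smul, bwdHom_yQ, smul_smul, inv_mul_cancel₀ hl, one_smul]
    · show bwdHom s t s' t' l hs ht (bwdHom s' t' s t l⁻¹ hs' ht' (zQ s' t')) = zQ s' t'
      rw [bwdHom_zQ, bwdHom_zQ]
  · apply RingQuot.ringQuot_ext'
    apply FreeAlgebra.hom_ext
    funext i
    fin_cases i
    · show bwdHom s' t' s t l⁻¹ hs' ht' (bwdHom s t s' t' l hs ht (xQ s t)) = xQ s t
      rw [bwdHom_xQ, bwdHom_xQ]
    · show bwdHom s' t' s t l⁻¹ hs' ht' (bwdHom s t s' t' l hs ht (yQ s t)) = yQ s t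
      rw [bwdHom_yQ, map_smul, bwdHom_yQ, smul_smul, mul_inv_cancel₀ hl, one_smul]
    · show bwdHom s' t' s t l⁻¹ hs' ht' (bwdHom s t s' t' l hs ht (zQ s t)) = zQ s t
      rw [bwdHom_zQ, bwdHom_zQ]

lemma bwdEquiv_xQ (s t s' t' l : ℂ) (hl : l ≠ 0) (hs : s' = l * s) (ht : t' = l * t) :
    bwdEquiv s t s' t' l hl hs ht (xQ s t) = xQ s' t' := bwdHom_xQ s t s' t' l hs ht

lemma bwdEquiv_yQ (s t s' t' l : ℂ) (hl : l ≠ 0) (hs : s' = l * s) (ht : t' = l * t) :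
    bwdEquiv s t s' t' l hl hs ht (yQ s t) = l • yQ s' t' := bwdHom_yQ s t s' t' l hs ht

lemma bwdEquiv_zQ (s t s' t' l : ℂ) (hl : l ≠ 0) (hs : s' = l * s) (ht : t' = l * t) :
    bwdEquiv s t s' t' l hl hs ht (zQ s t) = zQ s' t' := bwdHom_zQ s t s' t' l hs ht

end S2aux

set_option maxHeartbeats 2000000 in
open S2aux in
theorem typeS2_iso_iff
    (α β α' β' : ℂ)
    (h : α * β ≠ 0)
    (h' : α' * β' ≠ 0)
    : GrIso
      (Z*X - α • (Y*Z))
      (X*Z - β • (Z*Y))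
      (X*X + (α*β) • (Y*Y))
      (Z*X - α' • (Y*Z))
      (X*Z - β' • (Z*Y))
      (X*X + (α'*β') • (Y*Y))
      ↔
      (∃ l : ℂ, l ≠ 0 ∧ α' = l*α ∧ β' = l*β) := by
  have hα : α ≠ 0 := left_ne_zero_of_mul h
  have hβ : β ≠ 0 := right_ne_zero_of_mul h
  have hα' : α' ≠ 0 := left_ne_zero_of_mul h'
  have hβ' : β' ≠ 0 := right_ne_zero_of_mul h'
  constructor
  · rintro ⟨e, hmap⟩
    have hmap' : Submodule.map e.toLinearMap
        (Submodule.span ℂ ({xQ α β, yQ α β, zQ α β} :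
          Set (QuadAlg (fR1 α) (fR2 β) (fR3 α β))))
        = Submodule.span ℂ ({xQ α' β', yQ α' β', zQ α' β'} :
          Set (QuadAlg (fR1 α') (fR2 β') (fR3 α' β'))) := hmap
    -- coordinates of the images of the generators
    have hxmem : e (xQ α β) ∈ Submodule.span ℂ
        ({xQ α' β', yQ α' β', zQ α' β'} : Set (QuadAlg (fR1 α') (fR2 β') (fR3 α' β'))) := by
      have h1 : (xQ α β) ∈ Submodule.span ℂ ({xQ α β, yQ α β, zQ α β} :
          Set (QuadAlg (fR1 α) (fR2 β) (fR3 α β))) :=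
        Submodule.subset_span (Set.mem_insert _ _)
      have h2 := Submodule.mem_map_of_mem (f := e.toLinearMap) h1
      rw [hmap'] at h2
      simpa using h2
    have hymem : e (yQ α β) ∈ Submodule.span ℂ
        ({xQ α' β', yQ α' β', zQ α' β'} : Set (QuadAlg (fR1 α') (fR2 β') (fR3 α' β'))) := by
      have h1 : (yQ α β) ∈ Submodule.span ℂ ({xQ α β, yQ α β, zQ α β} :
          Set (QuadAlg (fR1 α) (fR2 β) (fR3 α β))) :=
        Submodule.subset_span (Set.mem_insert_iff.2 (Or.inr (Set.mem_insert _ _)))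
      have h2 := Submodule.mem_map_of_mem (f := e.toLinearMap) h1
      rw [hmap'] at h2
      simpa using h2
    have hzmem : e (zQ α β) ∈ Submodule.span ℂ
        ({xQ α' β', yQ α' β', zQ α' β'} : Set (QuadAlg (fR1 α') (fR2 β') (fR3 α' β'))) := by
      have h1 : (zQ α β) ∈ Submodule.span ℂ ({xQ α β, yQ α β, zQ α β} :
          Set (QuadAlg (fR1 α) (fR2 β) (fR3 α β))) :=
        Submodule.subset_span
          (Set.mem_insert_iff.2 (Or.inr (Set.mem_insert_iff.2 (Or.inr rfl))))
      have h2 := Submodule.mem_map_of_mem (f := e.toLinearMap) h1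
      rw [hmap'] at h2
      simpa using h2
    obtain ⟨u0, u1, u2, hu⟩ := mem_span_triple hxmem
    obtain ⟨v0, v1, v2, hv⟩ := mem_span_triple hymem
    obtain ⟨w0, w1, w2, hw⟩ := mem_span_triple hzmem
    -- images under Psi
    have hPx : Psi α' β' (e (xQ α β)) = deg1 _ (bQ α' β') ![u0, u1, u2] := by
      rw [hu, map_add, map_add, map_smul, map_smul, map_smul, Psi_xQ, Psi_yQ, Psi_zQ,
        ← deg1_smul, ← deg1_smul, ← deg1_smul, ← deg1_add, ← deg1_add]
      congr 1
      funext i; fin_cases i <;> simp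
    have hPy : Psi α' β' (e (yQ α β)) = deg1 _ (bQ α' β') ![v0, v1, v2] := by
      rw [hv, map_add, map_add, map_smul, map_smul, map_smul, Psi_xQ, Psi_yQ, Psi_zQ,
        ← deg1_smul, ← deg1_smul, ← deg1_smul, ← deg1_add, ← deg1_add]
      congr 1
      funext i; fin_cases i <;> simp
    have hPz : Psi α' β' (e (zQ α β)) = deg1 _ (bQ α' β') ![w0, w1, w2] := by
      rw [hw, map_add, map_add, map_smul, map_smul, map_smul, Psi_xQ, Psi_yQ, Psi_zQ,
        ← deg1_smul, ← deg1_smul, ← deg1_smul, ← deg1_add, ← deg1_add]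
      congr 1
      funext i; fin_cases i <;> simp
    -- first relator
    have hm1 : Matrix.vecMulVec ![w0,w1,w2] ![u0,u1,u2]
        - α • Matrix.vecMulVec ![v0,v1,v2] ![w0,w1,w2] ∈ Sp α' β' := by
      have h0 : e (zQ α β) * e (xQ α β) - α • (e (yQ α β) * e (zQ α β)) = 0 := by
        rw [← map_mul, ← map_mul, ← map_smul, ← map_sub]
        have h1 : zQ α β * xQ α β - α • (yQ α β * zQ α β) = 0 := by
          have h2 := mk_fR1 α β
          rwa [show fR1 α = Z*X - α • (Y*Z) from rfl, map_sub, map_smul, map_mul, map_mul] at h2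
        rw [h1, map_zero]
      have h3 := congrArg (Psi α' β') h0
      rwa [map_sub, map_smul, map_mul, map_mul, map_zero, hPx, hPy, hPz, deg1_mul, deg1_mul,
        ← deg2_smul, ← deg2_sub, deg2_eq_zero, bQ_apply, bQ_apply,
        ← Submodule.Quotient.mk_smul, ← Submodule.Quotient.mk_sub,
        Submodule.Quotient.mk_eq_zero] at h3
    -- second relator
    have hm2 : Matrix.vecMulVec ![u0,u1,u2] ![w0,w1,w2]
        - β • Matrix.vecMulVec ![w0,w1,w2] ![v0,v1,v2] ∈ Sp α' β' := by
      have h0 : e (xQ α β) * e (zQ α β) - β • (e (zQ α β) * e (yQ α β)) = 0 := by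
        rw [← map_mul, ← map_mul, ← map_smul, ← map_sub]
        have h1 : xQ α β * zQ α β - β • (zQ α β * yQ α β) = 0 := by
          have h2 := mk_fR2 α β
          rwa [show fR2 β = X*Z - β • (Z*Y) from rfl, map_sub, map_smul, map_mul, map_mul] at h2
        rw [h1, map_zero]
      have h3 := congrArg (Psi α' β') h0
      rwa [map_sub, map_smul, map_mul, map_mul, map_zero, hPx, hPy, hPz, deg1_mul, deg1_mul,
        ← deg2_smul, ← deg2_sub, deg2_eq_zero, bQ_apply, bQ_apply,
        ← Submodule.Quotient.mk_smul, ← Submodule.Quotient.mk_sub,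
        Submodule.Quotient.mk_eq_zero] at h3
    -- third relator
    have hm3 : Matrix.vecMulVec ![u0,u1,u2] ![u0,u1,u2]
        + (α*β) • Matrix.vecMulVec ![v0,v1,v2] ![v0,v1,v2] ∈ Sp α' β' := by
      have h0 : e (xQ α β) * e (xQ α β) + (α*β) • (e (yQ α β) * e (yQ α β)) = 0 := by
        rw [← map_mul, ← map_mul, ← map_smul, ← map_add]
        have h1 : xQ α β * xQ α β + (α*β) • (yQ α β * yQ α β) = 0 := by
          have h2 := mk_fR3 α β
          rwa [show fR3 α β = X*X + (α*β) • (Y*Y) from rfl, map_add, map_smul, map_mul,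
            map_mul] at h2
        rw [h1, map_zero]
      have h3 := congrArg (Psi α' β') h0
      rwa [map_add, map_smul, map_mul, map_mul, map_zero, hPx, hPy, deg1_mul, deg1_mul,
        ← deg2_smul, ← deg2_add, deg2_eq_zero, bQ_apply, bQ_apply,
        ← Submodule.Quotient.mk_smul, ← Submodule.Quotient.mk_add,
        Submodule.Quotient.mk_eq_zero] at h3
    obtain ⟨B1a, B1b, B1c⟩ := Sp_entries hm1
    obtain ⟨B2a, B2b, B2c⟩ := Sp_entries hm2
    obtain ⟨B3a, B3b, B3c⟩ := Sp_entries hm3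
    simp only [Matrix.sub_apply, Matrix.add_apply, Matrix.smul_apply, Matrix.vecMulVec_apply,
      smul_eq_mul, Matrix.cons_val_zero, Matrix.cons_val_one, Matrix.head_cons,
      Matrix.cons_val_two, Matrix.tail_cons] at B1a B1b B1c B2a B2b B2c B3a B3b B3c
    -- nondegeneracy facts
    have hyne : yQ α β ≠ 0 := by
      intro h0
      have h1 := congrArg (Psi α β) h0
      rw [Psi_yQ, map_zero, deg1_eq_zero] at h1
      have h2 := congrFun h1 1
      simpa using h2
    have hzne : zQ α β ≠ 0 := by
      intro h0
      have h1 := congrArg (Psi α β) h0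
      rw [Psi_zQ, map_zero, deg1_eq_zero] at h1
      have h2 := congrFun h1 2
      simpa using h2
    have hvne : ¬(v0 = 0 ∧ v1 = 0 ∧ v2 = 0) := by
      rintro ⟨rfl, rfl, rfl⟩
      apply hyne
      apply e.injective
      rw [map_zero, hv]
      simp
    have hwne : ¬(w0 = 0 ∧ w1 = 0 ∧ w2 = 0) := by
      rintro ⟨rfl, rfl, rfl⟩
      apply hzne
      apply e.injective
      rw [map_zero, hw]
      simp
    have hcol : ¬(u2 = 0 ∧ v2 = 0 ∧ w2 = 0) := by
      rintro ⟨hc1, hc2, hc3⟩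
      have hz' : (zQ α' β') ∈ Submodule.map e.toLinearMap
          (Submodule.span ℂ ({xQ α β, yQ α β, zQ α β} :
            Set (QuadAlg (fR1 α) (fR2 β) (fR3 α β)))) := by
        rw [hmap']
        exact Submodule.subset_span
          (Set.mem_insert_iff.2 (Or.inr (Set.mem_insert_iff.2 (Or.inr rfl))))
      obtain ⟨tt, htt, hett⟩ := hz'
      obtain ⟨p, q, r, rfl⟩ := mem_span_triple htt
      have h4 : e (p • xQ α β + q • yQ α β + r • zQ α β) = zQ α' β' := by
        simpa using hett
      rw [map_add, map_add, map_smul, map_smul, map_smul] at h4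
      have h5 := congrArg (Psi α' β') h4
      rw [map_add, map_add, map_smul, map_smul, map_smul, hPx, hPy, hPz, Psi_zQ,
        ← deg1_smul, ← deg1_smul, ← deg1_smul, ← deg1_add, ← deg1_add] at h5
      have h6 := congrFun (congrArg (fun x : Tr (Wq α' β') (bQ α' β') => x.2.1) h5) 2
      simp [deg1, hc1, hc2, hc3] at h6
    have key : α' * β = α * β' :=
      @endgame α β α' β' u0 u1 u2 v0 v1 v2 w0 w1 w2 hα hβ hα' hβ' (by linear_combination B1c) (by linear_combination B1a)
        (by linear_combination B1b) (by linear_combination B2c) (by linear_combination B2a)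
        (by linear_combination B2b) (by linear_combination B3c) hvne hwne hcol
    refine ⟨α' / α, div_ne_zero hα' hα, by field_simp, ?_⟩
    field_simp
    linear_combination -key
  · rintro ⟨l, hl, ha, hb⟩
    refine ⟨bwdEquiv α β α' β' l hl ha hb, ?_⟩
    have himg : (⇑(bwdEquiv α β α' β' l hl ha hb).toLinearMap) ''
        {xQ α β, yQ α β, zQ α β} = {xQ α' β', l • yQ α' β', zQ α' β'} := by
      rw [Set.image_insert_eq, Set.image_insert_eq, Set.image_singleton]
      simp only [AlgEquiv.toLinearMap_apply]
      rw [bwdEquiv_xQ, bwdEquiv_yQ, bwdEquiv_zQ]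
    show Submodule.map (bwdEquiv α β α' β' l hl ha hb).toLinearMap
        (Submodule.span ℂ ({xQ α β, yQ α β, zQ α β} :
          Set (QuadAlg (fR1 α) (fR2 β) (fR3 α β))))
      = Submodule.span ℂ ({xQ α' β', yQ α' β', zQ α' β'} :
          Set (QuadAlg (fR1 α') (fR2 β') (fR3 α' β')))
    rw [Submodule.map_span, himg]
    apply le_antisymm
    · rw [Submodule.span_le]
      rintro x (rfl | rfl | rfl)
      · exact Submodule.subset_span (Set.mem_insert _ _)
      · exact Submodule.smul_mem _ l (Submodule.subset_span
          (Set.mem_insert_iff.2 (Or.inr (Set.mem_insert _ _))))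
      · exact Submodule.subset_span
          (Set.mem_insert_iff.2 (Or.inr (Set.mem_insert_iff.2 (Or.inr rfl))))
    · rw [Submodule.span_le]
      rintro x (rfl | rfl | rfl)
      · exact Submodule.subset_span (Set.mem_insert _ _)
      · have hmem : l • yQ α' β' ∈ Submodule.span ℂ
            ({xQ α' β', l • yQ α' β', zQ α' β'} :
              Set (QuadAlg (fR1 α') (fR2 β') (fR3 α' β'))) :=
          Submodule.subset_span (Set.mem_insert_iff.2 (Or.inr (Set.mem_insert _ _)))
        have h2 := Submodule.smul_mem _ l⁻¹ hmem
        rwa [smul_smul, inv_mul_cancel₀ hl, one_smul] at h2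
      · exact Submodule.subset_span
          (Set.mem_insert_iff.2 (Or.inr (Set.mem_insert_iff.2 (Or.inr rfl))))
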